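/- Every interval exchange transformation g ∈ 𝒢_m (m ≥ 2) can be written as a product of at most m−1 restricted rotations. -/

import Mathlib

/-- `f` is an interval exchange transformation (IET) of `[0,1)`, viewed as a permutation of `ℝ`
that fixes every point outside `[0,1)`: there is a finite subdivision
`0 = a 0 < a 1 < … < a (m+1) = 1` such that `f` is a translation on each half-open
interval `[a i, a (i+1))`. -/
def IsIET (f : Equiv.Perm ℝ) : Prop :=
  (∀ x : ℝ, x ∉ Set.Ico (0 : ℝ) 1 → f x = x) ∧
  ∃ (m : ℕ) (a : Fin (m + 2) → ℝ),
    a 0 = 0 ∧ a (Fin.last (m + 1)) = 1 ∧ StrictMono a ∧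
    ∀ i : Fin (m + 1), ∃ c : ℝ, ∀ x ∈ Set.Ico (a i.castSucc) (a i.succ), f x = x + c

/-- `f` is an interval exchange transformation with flips (FIET) of `[0,1)`, viewed as a
permutation of `ℝ` fixing every point outside `[0,1)`: there is a finite subdivision
`0 = a 0 < a 1 < … < a (m+1) = 1` such that on each open interval `(a i, a (i+1))`, `f` is an
isometry, i.e. of the form `x ↦ x + c` or `x ↦ c - x`. -/
def IsFIET (f : Equiv.Perm ℝ) : Prop :=
  (∀ x : ℝ, x ∉ Set.Ico (0 : ℝ) 1 → f x = x) ∧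
  ∃ (m : ℕ) (a : Fin (m + 2) → ℝ),
    a 0 = 0 ∧ a (Fin.last (m + 1)) = 1 ∧ StrictMono a ∧
    ∀ i : Fin (m + 1),
      (∃ c : ℝ, ∀ x ∈ Set.Ioo (a i.castSucc) (a i.succ), f x = x + c) ∨
      (∃ c : ℝ, ∀ x ∈ Set.Ioo (a i.castSucc) (a i.succ), f x = c - x)

/-- Two permutations of `ℝ` agree outside a finite set; this is equality of the classes in the
quotient group `𝒢̄` of FIETs modulo maps that are the identity off a finite set. -/
def FEq (f g : Equiv.Perm ℝ) : Prop := {x : ℝ | f x ≠ g x}.Finite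

open scoped commutatorElement

/-- The set of commutators `⁅a, b⁆ = a * b * a⁻¹ * b⁻¹` of interval exchange
transformations. -/
def IETCommutators : Set (Equiv.Perm ℝ) :=
  {x | ∃ a b : Equiv.Perm ℝ, IsIET a ∧ IsIET b ∧ x = ⁅a, b⁆}

/-- The set of commutators `⁅a, b⁆ = a * b * a⁻¹ * b⁻¹` of interval exchange
transformations with flips. -/
def FIETCommutators : Set (Equiv.Perm ℝ) :=
  {x | ∃ a b : Equiv.Perm ℝ, IsFIET a ∧ IsFIET b ∧ x = ⁅a, b⁆}

/-- `g` is a product of at most `n` commutators of elements of the group `𝒢` of interval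
exchange transformations; i.e. the commutator length of `g` in `𝒢` is at most `n`. -/
def IsProdOfIETCommutators (n : ℕ) (g : Equiv.Perm ℝ) : Prop :=
  ∃ l : List (Equiv.Perm ℝ), l.length ≤ n ∧ (∀ x ∈ l, x ∈ IETCommutators) ∧ g = l.prod

/-- `f ∈ 𝒢_m`: `f` is an IET of `[0,1)` admitting a subdivision into at most `m` half-open
intervals on each of which it is a translation. -/
def MemGm (m : ℕ) (f : Equiv.Perm ℝ) : Prop :=
  (∀ x : ℝ, x ∉ Set.Ico (0 : ℝ) 1 → f x = x) ∧
  ∃ (k : ℕ) (a : Fin (k + 2) → ℝ), k + 1 ≤ m ∧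
    a 0 = 0 ∧ a (Fin.last (k + 1)) = 1 ∧ StrictMono a ∧
    ∀ i : Fin (k + 1), ∃ c : ℝ, ∀ x ∈ Set.Ico (a i.castSucc) (a i.succ), f x = x + c

/-- `g` is periodic: every orbit `{gⁿ x : n ∈ ℤ}` is finite. -/
def IsPeriodicPerm (g : Equiv.Perm ℝ) : Prop :=
  ∀ x : ℝ, (Set.range fun n : ℤ => (g ^ n) x).Finite

/-- `f` is a restricted rotation: for some half-open interval `J = [a, b) ⊆ [0,1)` and some
`α ∈ [0, b - a)`, `f` is the identity outside `J` and sends `x ∈ J` to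
`a + ((x - a + α) mod (b - a))`. -/
def IsRestrictedRotation (f : Equiv.Perm ℝ) : Prop :=
  ∃ a b α : ℝ, 0 ≤ a ∧ a < b ∧ b ≤ 1 ∧ α ∈ Set.Ico (0 : ℝ) (b - a) ∧
    (∀ x : ℝ, x ∉ Set.Ico a b → f x = x) ∧
    ∀ x ∈ Set.Ico a b, f x = x + α - (b - a) * (⌊(x - a + α) / (b - a)⌋ : ℝ)

/-- `Δ_α`: the additive subgroup of `ℝ` generated by `α 0, …, α (p-1)` and `1`. -/
def Delta {p : ℕ} (α : Fin p → ℝ) : AddSubgroup ℝ :=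
  AddSubgroup.closure (Set.range α ∪ {1})

/-- `g ∈ Γ_α`: `g` is an IET all of whose discontinuity points (as a map of `[0,1)`)
belong to the subgroup `Δ`. -/
def MemGamma (Δ : AddSubgroup ℝ) (g : Equiv.Perm ℝ) : Prop :=
  IsIET g ∧
  ∀ x ∈ Set.Ico (0 : ℝ) 1, ¬ContinuousWithinAt (⇑g) (Set.Ico (0 : ℝ) 1) x → x ∈ Δ

/-- `g ∈ Γ_α(J)` for `J = [c, d)`: `g` is an IET supported in `[c, d)` all of whose
discontinuity points belong to `Δ`. -/
def MemGammaJ (Δ : AddSubgroup ℝ) (c d : ℝ) (g : Equiv.Perm ℝ) : Prop :=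
  IsIET g ∧ (∀ x : ℝ, x ∉ Set.Ico c d → g x = x) ∧
  ∀ x ∈ Set.Ico (0 : ℝ) 1, ¬ContinuousWithinAt (⇑g) (Set.Ico (0 : ℝ) 1) x → x ∈ Δ


noncomputable def rotFun (p d α : ℝ) (x : ℝ) : ℝ :=
  if p ≤ x ∧ x < d then (if x + α < d then x + α else x + α - (d - p)) else x

lemma rotFun_zero (p d x : ℝ) : rotFun p d 0 x = x := by
  rw [rotFun]
  split
  · rw [if_pos (by linarith [‹p ≤ x ∧ x < d›.2])]; ring
  · rfl

lemma rotFun_inv (p d : ℝ) (hpd : p < d) : ∀ α, 0 ≤ α → α < d - p →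
    ∀ x, rotFun p d (if α = 0 then 0 else d - p - α) (rotFun p d α x) = x := by
  intro α h0 h1 x
  by_cases hα : α = 0
  · subst hα; rw [if_pos rfl, rotFun_zero, rotFun_zero]
  · rw [if_neg hα]
    have hα0 : 0 < α := lt_of_le_of_ne h0 (Ne.symm hα)
    by_cases hx : p ≤ x ∧ x < d
    · by_cases h2 : x + α < d
      · have hy : rotFun p d α x = x + α := by rw [rotFun, if_pos hx, if_pos h2]
        rw [hy, rotFun, if_pos ⟨by linarith [hx.1], h2⟩, if_neg (by linarith [hx.1])]
        ring
      · have hy : rotFun p d α x = x + α - (d - p) := by rw [rotFun, if_pos hx, if_neg h2]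
        rw [hy, rotFun, if_pos ⟨by linarith [hx.2], by linarith [h1, hx.1]⟩,
          if_pos (by linarith [hx.2])]
        ring
    · have hy : rotFun p d α x = x := by rw [rotFun, if_neg hx]
      rw [hy, rotFun, if_neg hx]

noncomputable def rotPerm (p d α : ℝ) (hpd : p < d) (h0 : 0 ≤ α) (h1 : α < d - p) :
    Equiv.Perm ℝ where
  toFun := rotFun p d α
  invFun := rotFun p d (if α = 0 then 0 else d - p - α)
  left_inv := rotFun_inv p d hpd α h0 h1
  right_inv := by
    intro x
    set β := (if α = 0 then 0 else d - p - α) with hβ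
    have h0' : 0 ≤ β := by rw [hβ]; split; exacts [le_refl 0, by linarith]
    have h1' : β < d - p := by
      rw [hβ]; split
      · linarith
      · rename_i h
        have : 0 < α := lt_of_le_of_ne h0 (Ne.symm h)
        linarith
    have key := rotFun_inv p d hpd β h0' h1' x
    have : (if β = 0 then 0 else d - p - β) = α := by
      rw [hβ]; by_cases hα : α = 0
      · simp [hα]
      · rw [if_neg hα, if_neg (by intro h; exact hα (by linarith)), ]
        ring
    rwa [this] at key

lemma isRR_of_rotFun (f : Equiv.Perm ℝ) (p d α : ℝ) (hf : ∀ x, f x = rotFun p d α x)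
    (h0p : 0 ≤ p) (hpd : p < d) (hd1 : d ≤ 1) (h0 : 0 ≤ α) (h1 : α < d - p) :
    IsRestrictedRotation f := by
  refine ⟨p, d, α, h0p, hpd, hd1, ⟨h0, h1⟩, ?_, ?_⟩
  · intro x hx
    rw [hf, rotFun, if_neg (by simpa [Set.mem_Ico] using hx)]
  · intro x hx
    rw [Set.mem_Ico] at hx
    rw [hf, rotFun, if_pos hx]
    have hdp : (0:ℝ) < d - p := by linarith
    by_cases h2 : x + α < d
    · rw [if_pos h2]
      have : ⌊(x - p + α) / (d - p)⌋ = 0 := by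
        rw [Int.floor_eq_zero_iff]
        constructor
        · exact div_nonneg (by linarith) (by linarith)
        · rw [div_lt_one hdp]; linarith
      rw [this]; push_cast; ring
    · rw [if_neg h2]
      have : ⌊(x - p + α) / (d - p)⌋ = 1 := by
        rw [Int.floor_eq_iff]
        constructor
        · rw [le_div_iff₀ hdp]; push_cast; linarith
        · rw [div_lt_iff₀ hdp]; push_cast; linarith [hx.2]
      rw [this]; push_cast; ring

lemma rotPerm_apply (p d α : ℝ) (hpd : p < d) (h0 : 0 ≤ α) (h1 : α < d - p) (x : ℝ) :
    rotPerm p d α hpd h0 h1 x = rotFun p d α x := rfl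

lemma rotPerm_inv_apply (p d α : ℝ) (hpd : p < d) (h0 : 0 ≤ α) (h1 : α < d - p) (x : ℝ) :
    (rotPerm p d α hpd h0 h1)⁻¹ x = rotFun p d (if α = 0 then 0 else d - p - α) x := rfl

lemma rotFun_if (p d α x : ℝ) :
    rotFun p d α x = if p ≤ x ∧ x < d then (if x + α < d then x + α else x + α - (d - p)) else x := rfl

lemma perm_mapsTo {g : Equiv.Perm ℝ} {S : Set ℝ} (h : ∀ x ∉ S, g x = x) :
    ∀ x ∈ S, g x ∈ S := by
  intro x hx
  by_contra hgx
  have h2 : g (g x) = g x := h (g x) hgx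
  exact hgx (by rw [g.injective h2]; exact hx)

lemma perm_inv_fix {g : Equiv.Perm ℝ} {S : Set ℝ} (h : ∀ x ∉ S, g x = x) :
    ∀ x ∉ S, g⁻¹ x = x := by
  intro x hx
  have : g x = x := h x hx
  conv_lhs => rw [← this]
  simp

lemma key : ∀ k : ℕ, ∀ d : ℝ, 0 < d → d ≤ 1 → ∀ g : Equiv.Perm ℝ,
    (∀ x : ℝ, x ∉ Set.Ico (0:ℝ) d → g x = x) →
    (∃ a : Fin (k+2) → ℝ, a 0 = 0 ∧ a (Fin.last (k+1)) = d ∧ StrictMono a ∧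
      ∀ i : Fin (k+1), ∃ c : ℝ, ∀ x ∈ Set.Ico (a i.castSucc) (a i.succ), g x = x + c) →
    ∃ l : List (Equiv.Perm ℝ), l.length ≤ k ∧ (∀ r ∈ l, IsRestrictedRotation r) ∧
      g = l.prod := by
  intro k
  induction k with
  | zero =>
    intro d hd0 hd1 g hfix ⟨a, ha0, halast, hmono, hpieces⟩
    obtain ⟨c, hc⟩ := hpieces 0
    have e1 : a (0 : Fin 1).castSucc = 0 := ha0
    have e2 : a (0 : Fin 1).succ = d := by
      rw [show (0 : Fin 1).succ = Fin.last 1 from rfl]; exact halast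
    rw [e1, e2] at hc
    have h0d : (0:ℝ) ∈ Set.Ico (0:ℝ) d := ⟨le_refl 0, hd0⟩
    have hc0 : g 0 = c := by simpa using hc 0 h0d
    have hge : 0 ≤ c := by
      have := (perm_mapsTo hfix 0 h0d).1; rwa [hc0] at this
    have hle : c ≤ 0 := by
      have hy : g⁻¹ 0 ∈ Set.Ico (0:ℝ) d := perm_mapsTo (perm_inv_fix hfix) 0 h0d
      have : g (g⁻¹ 0) = g⁻¹ 0 + c := hc _ hy
      rw [show g (g⁻¹ 0) = 0 from g.apply_symm_apply 0] at this
      linarith [hy.1]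
    have hceq : c = 0 := le_antisymm hle hge
    refine ⟨[], by simp, by simp, ?_⟩
    ext x
    simp only [List.prod_nil, Equiv.Perm.coe_one, id_eq]
    by_cases hx : x ∈ Set.Ico (0:ℝ) d
    · rw [hc x hx, hceq, add_zero]
    · exact hfix x hx
  | succ k ih =>
    intro d hd0 hd1 g hfix ⟨a, ha0, halast, hmono, hpieces⟩
    obtain ⟨c, hc⟩ := hpieces (Fin.last (k+1))
    have hsucc : a (Fin.last (k+1)).succ = d := by
      rw [show (Fin.last (k+1)).succ = Fin.last (k+2) from rfl]; exact halast
    set t := a (Fin.last (k+1)).castSucc with htdef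
    have ht0 : 0 < t := by
      rw [← ha0]
      exact hmono (by rw [Fin.lt_def]; simp)
    have htd : t < d := by
      rw [← hsucc]
      exact hmono Fin.castSucc_lt_succ
    have hmem : ∀ x ∈ Set.Ico (0:ℝ) d, g x ∈ Set.Ico (0:ℝ) d := perm_mapsTo hfix
    have hA : ∀ x, t ≤ x → x < d → g x = x + c := by
      intro x hx1 hx2
      exact hc x ⟨hx1, by rw [hsucc]; exact hx2⟩
    have hcle : c ≤ 0 := by
      by_contra hc0
      push_neg at hc0
      set μ := min c (d - t) with hμdef
      have hμc : μ ≤ c := min_le_left _ _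
      have hμt : μ ≤ d - t := min_le_right _ _
      have hμ0 : 0 < μ := lt_min hc0 (by linarith)
      set x := d - μ / 2 with hxdef
      have hx1 : t ≤ x := by rw [hxdef]; linarith
      have hx2 : x < d := by rw [hxdef]; linarith
      have hgx : g x = x + c := hA x hx1 hx2
      have := (hmem x ⟨by linarith, hx2⟩).2
      rw [hgx, hxdef] at this
      linarith
    set p := t + c with hpdef
    have hp0 : 0 ≤ p := by
      have h1 := (hmem t ⟨ht0.le, htd⟩).1
      rwa [hA t le_rfl htd] at h1
    have hpt : p ≤ t := by rw [hpdef]; linarith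
    have hpd : p < d := lt_of_le_of_lt hpt htd
    set α := t - p with hαdef
    have hα0 : 0 ≤ α := by rw [hαdef]; linarith
    have hα1 : α < d - p := by rw [hαdef]; linarith
    set r := rotPerm p d α hpd hα0 hα1 with hrdef
    have hB : ∀ x, 0 ≤ x → x < t → ¬(p ≤ g x ∧ g x < p + (d - t)) := by
      rintro x hx0 hxt ⟨h1, h2⟩
      set y := g x - c with hydef
      have hy1 : t ≤ y := by rw [hydef, hpdef] at *; linarith
      have hy2 : y < d := by rw [hydef, hpdef] at *; linarith
      have hgy : g y = g x := by rw [hA y hy1 hy2, hydef]; ring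
      have := g.injective hgy
      rw [this] at hy1
      linarith
    set h := r * g with hhdef
    have hfix' : ∀ x : ℝ, x ∉ Set.Ico (0:ℝ) t → h x = x := by
      intro x hx
      rw [Set.mem_Ico, not_and_or, not_le, not_lt] at hx
      rw [hhdef, Equiv.Perm.mul_apply]
      by_cases hxd : 0 ≤ x ∧ x < d
      · have hxt : t ≤ x := by
          rcases hx with h1 | h1
          · linarith [hxd.1]
          · exact h1
        have hgx : g x = x + c := hA x hxt hxd.2
        rw [hgx, hrdef, rotPerm_apply, rotFun_if,
          if_pos ⟨by rw [hpdef]; linarith, by linarith [hxd.2]⟩,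
          if_pos (by rw [hαdef, hpdef]; linarith [hxd.2])]
        rw [hαdef, hpdef]; ring
      · rw [hfix x (fun hmem2 => hxd (Set.mem_Ico.mp hmem2)), hrdef, rotPerm_apply,
          rotFun_if, if_neg]
        rintro ⟨h1, h2⟩
        rw [not_and_or, not_le, not_lt] at hxd
        rcases hxd with h3 | h3 <;> linarith
    have hpieces' : ∀ j : Fin (k+1), ∃ c' : ℝ,
        ∀ x ∈ Set.Ico (a j.castSucc.castSucc) (a j.succ.castSucc), h x = x + c' := by
      intro j
      obtain ⟨cj, hcj⟩ := hpieces j.castSucc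
      rw [← Fin.succ_castSucc] at *
      have hsub : ∀ x ∈ Set.Ico (a j.castSucc.castSucc) (a j.castSucc.succ),
          0 ≤ x ∧ x < t := by
        rintro x ⟨hx1, hx2⟩
        constructor
        · rw [← ha0]
          exact le_trans (hmono.monotone (Fin.zero_le _)) hx1
        · refine lt_of_lt_of_le hx2 (hmono.monotone ?_)
          rw [Fin.le_def]
          simp [Fin.lt_def]
          omega
      have hnotmid : ∀ x ∈ Set.Ico (a j.castSucc.castSucc) (a j.castSucc.succ),
          g x < p ∨ p + (d - t) ≤ g x := by
        intro x hx
        have h1 := hB x (hsub x hx).1 (hsub x hx).2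
        by_contra hcon
        push_neg at hcon
        exact h1 hcon
      set x₀ := a j.castSucc.castSucc with hx₀def
      have hx₀ : x₀ ∈ Set.Ico (a j.castSucc.castSucc) (a j.castSucc.succ) :=
        ⟨le_rfl, hmono Fin.castSucc_lt_succ⟩
      have hgx0 : g x₀ = x₀ + cj := hcj x₀ hx₀
      by_cases hcase : g x₀ < p
      · refine ⟨cj, ?_⟩
        rintro x hx
        have hgx : g x = x + cj := hcj x hx
        have hlt : g x < p := by
          rcases hnotmid x hx with h1 | h1
          · exact h1
          · exfalso
            set w := p - cj with hwdef
            have hw : w ∈ Set.Ico (a j.castSucc.castSucc) (a j.castSucc.succ) := by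
              constructor
              · rw [← hx₀def, hwdef]
                rw [hgx0] at hcase
                linarith
              · refine lt_of_le_of_lt ?_ hx.2
                rw [hwdef]; rw [hgx] at h1
                linarith
            have hgw : g w = p := by rw [hcj w hw, hwdef]; ring
            exact hB w (hsub w hw).1 (hsub w hw).2
              ⟨by rw [hgw], by rw [hgw]; linarith⟩
        rw [hhdef, Equiv.Perm.mul_apply, hrdef, rotPerm_apply, rotFun_if, if_neg, hgx]
        rintro ⟨h1, _⟩
        exact absurd h1 (not_le.mpr hlt)
      · push_neg at hcase
        have hx₀ge : p + (d - t) ≤ g x₀ := by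
          rcases hnotmid x₀ hx₀ with h1 | h1
          · linarith
          · exact h1
        refine ⟨cj - (d - t), ?_⟩
        rintro x hx
        have hgx : g x = x + cj := hcj x hx
        have hge : p + (d - t) ≤ g x := by
          rcases hnotmid x hx with h1 | h1
          · exfalso
            rw [hgx] at h1
            linarith [hx.1, htd.le]
          · exact h1
        have hltd : g x < d := (hmem x ⟨(hsub x hx).1, lt_trans (hsub x hx).2 htd⟩).2
        rw [hhdef, Equiv.Perm.mul_apply, hrdef, rotPerm_apply, rotFun_if,
          if_pos ⟨by linarith, hltd⟩, if_neg (not_lt.mpr (by rw [hαdef]; linarith)),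
          hgx, hαdef, hpdef]
        ring
    obtain ⟨l', hlen', hrot', hprod'⟩ := ih t ht0 (le_trans htd.le hd1) h hfix'
      ⟨fun j => a j.castSucc, ha0, rfl,
        fun i j hij => hmono (Fin.castSucc_lt_castSucc_iff.mpr hij), hpieces'⟩
    refine ⟨r⁻¹ :: l', by simpa using hlen', ?_, ?_⟩
    · intro s hs
      rcases List.mem_cons.mp hs with h1 | h1
      · rw [h1]
        refine isRR_of_rotFun r⁻¹ p d (if α = 0 then 0 else d - p - α)
          (rotPerm_inv_apply p d α hpd hα0 hα1) hp0 hpd hd1 ?_ ?_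
        · split
          · exact le_rfl
          · linarith
        · split
          · linarith
          · rename_i hne
            have : 0 < α := lt_of_le_of_ne hα0 (Ne.symm hne)
            linarith
      · exact hrot' s h1
    · rw [List.prod_cons, ← hprod', hhdef]
      group

/-- Every `g ∈ 𝒢_m` (`m ≥ 2`) is a product of at most `m - 1` restricted rotations. -/
theorem IET_prod_of_restricted_rotations (m : ℕ) (hm : 2 ≤ m)
    (g : Equiv.Perm ℝ) (hg : MemGm m g) :
    ∃ l : List (Equiv.Perm ℝ), l.length ≤ m - 1 ∧
      (∀ r ∈ l, IsRestrictedRotation r) ∧ g = l.prod := by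
  obtain ⟨hfix, k, a, hk, ha0, halast, hmono, hpieces⟩ := hg
  obtain ⟨l, hlen, hrot, hprod⟩ := key k 1 one_pos le_rfl g hfix
    ⟨a, ha0, halast, hmono, hpieces⟩
  exact ⟨l, le_trans hlen (by omega), hrot, hprod⟩
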